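/- Let (X, α) and (Y, β) be finite productive labelled transition systems over a finite nonempty alphabet A, and let x ∈ X and y ∈ Y. Then σ_ω '' str(x) = σ_ω '' str(y) holds for every nonempty complete metric space M and every contraction operator interpretation σ of A on M if and only if str(x) = str(y). (This is the semantic form of the paper's main theorem: two process terms are fractal equivalent if and only if they emit the same streams.) -/

import Mathlib

open Filter Topology
open scoped NNReal

/-- `IsTrace α x w` : the word `w` labels a path starting at `x` in the LTS `(X, α)`. -/
inductive IsTrace {X A : Type} (α : X → Set (A × X)) : X → List A → Prop
  | nil (x : X) : IsTrace α x []
  | cons {x y : X} {a : A} {w : List A} :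
      (a, y) ∈ α x → IsTrace α y w → IsTrace α x (a :: w)

/-- The trace set of a state `x`. -/
def tr {X A : Type} (α : X → Set (A × X)) (x : X) : Set (List A) :=
  {w | IsTrace α x w}

/-- The set of streams emitted by a state `x`. -/
def str {X A : Type} (α : X → Set (A × X)) (x : X) : Set (ℕ → A) :=
  {s | ∀ n : ℕ, (List.ofFn fun i : Fin n => s i.val) ∈ tr α x}

/-- `seqApp σ s p n = (σ_{s 0} ∘ σ_{s 1} ∘ ⋯ ∘ σ_{s n}) p`. -/
def seqApp {A M : Type} (σ : A → M → M) (s : ℕ → A) (p : M) (n : ℕ) : M :=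
  (List.ofFn fun i : Fin (n + 1) => s i.val).foldr (fun a m => σ a m) p

/-- Prepend an element to a stream. -/
def pre {A : Type} (a : A) (s : ℕ → A) : ℕ → A := fun n => Nat.casesOn n a s

lemma foldr_pre_lt {A : Type} (l : List A) (p : ℕ → A) (i : ℕ) (h : i < l.length) :
    (l.foldr pre p) i = l.get ⟨i, h⟩ := by
  induction l generalizing i with
  | nil => simp at h
  | cons a l ih =>
    cases i with
    | zero => rfl
    | succ k => exact ih k (by simpa using h)

/-- Fractal equivalence is stream (trace) equivalence: two states of finite
productive LTSs generate the same regular subfractal under every contraction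
operator interpretation on every nonempty complete metric space iff they emit
the same streams. -/
theorem fractal_equiv_iff_str_eq {X Y A : Type} [Finite X] [Finite Y]
    [Fintype A] [Nonempty A]
    (α : X → Set (A × X)) (hαfin : ∀ x, (α x).Finite) (hαprod : ∀ x, α x ≠ ∅)
    (β : Y → Set (A × Y)) (hβfin : ∀ y, (β y).Finite) (hβprod : ∀ y, β y ≠ ∅)
    (x : X) (y : Y) :
    (∀ (M : Type) [MetricSpace M] [CompleteSpace M] [Nonempty M]
      (σ : A → M → M) (c : A → ℝ≥0), (∀ a, c a < 1) → (∀ a, LipschitzWith (c a) (σ a)) →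
      ∀ σω : (ℕ → A) → M,
        (∀ (s : ℕ → A) (p : M), Tendsto (fun n => seqApp σ s p n) atTop (𝓝 (σω s))) →
        σω '' str α x = σω '' str β y)
    ↔ str α x = str β y := by
  constructor
  · intro h
    letI : TopologicalSpace A := ⊥
    haveI : DiscreteTopology A := ⟨rfl⟩
    letI m : MetricSpace (∀ _ : ℕ, A) := PiNat.metricSpace (E := fun _ : ℕ => A)
    haveI : CompleteSpace (∀ _ : ℕ, A) := PiNat.completeSpace
    haveI : Nonempty (∀ _ : ℕ, A) := ⟨fun _ => Classical.arbitrary A⟩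
    have hdist : ∀ s t : ℕ → A, s ≠ t →
        dist s t = (1 / 2 : ℝ) ^ PiNat.firstDiff s t := fun _ _ h => PiNat.dist_eq_of_ne h
    have hc : ((1 : ℝ≥0) / 2) < 1 := by rw [← NNReal.coe_lt_coe]; norm_num
    have hlip : ∀ a : A, LipschitzWith ((1 : ℝ≥0) / 2) (pre a) := by
      intro a
      apply LipschitzWith.of_dist_le_mul
      intro s t
      rcases eq_or_ne s t with rfl | hst
      · simp [dist_self]
      have hne : pre a s ≠ pre a t := by
        intro hcon
        apply hst
        funext n
        exact congrFun hcon (n + 1)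
      rw [hdist _ _ hne, hdist _ _ hst]
      have hfd : PiNat.firstDiff s t + 1 ≤ PiNat.firstDiff (pre a s) (pre a t) := by
        by_contra hcon
        push_neg at hcon
        have hd := PiNat.apply_firstDiff_ne hne
        rcases hk : PiNat.firstDiff (pre a s) (pre a t) with _ | k
        · rw [hk] at hd; exact hd rfl
        · rw [hk] at hcon hd
          exact hd (PiNat.apply_eq_of_lt_firstDiff
            (x := s) (y := t) (n := k) (by omega))
      have h2 : (1 / 2 : ℝ) ^ PiNat.firstDiff (pre a s) (pre a t)
          ≤ (1 / 2 : ℝ) ^ (PiNat.firstDiff s t + 1) :=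
        pow_le_pow_of_le_one (by norm_num) (by norm_num) hfd
      calc (1 / 2 : ℝ) ^ PiNat.firstDiff (pre a s) (pre a t)
          ≤ (1 / 2 : ℝ) ^ (PiNat.firstDiff s t + 1) := h2
        _ = ((1 : ℝ≥0) / 2 : ℝ≥0) * (1 / 2 : ℝ) ^ PiNat.firstDiff s t := by
            rw [pow_succ]; push_cast; ring
    have key := h (∀ _ : ℕ, A) pre (fun _ => (1 : ℝ≥0) / 2) (fun _ => hc)
      (fun a => hlip a) id ?_
    · simpa using key
    intro s p
    rw [tendsto_iff_dist_tendsto_zero]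
    have hb : ∀ n : ℕ, dist (seqApp pre s p n) (id s) ≤ (1 / 2 : ℝ) ^ (n + 1) := by
      intro n
      rcases eq_or_ne (seqApp pre s p n) (id s) with he | hne
      · rw [he, dist_self]; positivity
      rw [hdist _ _ hne]
      apply pow_le_pow_of_le_one (by norm_num) (by norm_num)
      by_contra hcon
      push_neg at hcon
      apply PiNat.apply_firstDiff_ne hne
      set i := PiNat.firstDiff (seqApp pre s p n) (id s) with hi
      have hilt : i < n + 1 := hcon
      have hlen : i < (List.ofFn fun j : Fin (n + 1) => s j.val).length := by
        simpa using hilt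
      have hg := foldr_pre_lt (List.ofFn fun j : Fin (n + 1) => s j.val) p i hlen
      rw [List.get_ofFn] at hg
      show seqApp pre s p n i = id s i
      rw [seqApp]
      exact hg.trans (by simp)
    refine squeeze_zero (fun n => dist_nonneg) hb ?_
    have hp : Tendsto (fun n : ℕ => (1 / 2 : ℝ) ^ n) atTop (𝓝 0) :=
      tendsto_pow_atTop_nhds_zero_of_lt_one (by norm_num) (by norm_num)
    simpa [Function.comp_def] using hp.comp (tendsto_add_atTop_nat 1)
  · intro h M _ _ _ σ c hc hl σω hσω
    rw [h]
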